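/- If f is a nested canalizing function with k relevant variables and alternating canalized values β = (+1,-1,+1,-1,...) or (-1,+1,-1,+1,...), then |f̂(∅)| = (1/3)·((-1)^k/2^{k-1} + 1). -/

import Mathlib

open Finset

/-- Sign encoding of a Boolean value: `true ↦ 1`, `false ↦ -1`. -/
def bsign (a : Bool) : ℝ := if a then 1 else -1

/-- The character `χ_U(x) = ∏_{i ∈ U} x_i` (inputs encoded as Booleans). -/
def chi {n : ℕ} (U : Finset (Fin n)) (x : Fin n → Bool) : ℝ :=
  ∏ i ∈ U, bsign (x i)

/-- Fourier coefficient `f̂(U) = 2^{-n} ∑_x f(x) χ_U(x)`. -/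
noncomputable def fhat {n : ℕ} (f : (Fin n → Bool) → ℝ) (U : Finset (Fin n)) : ℝ :=
  (∑ x : Fin n → Bool, f x * chi U x) / 2 ^ n

/-- `f` is a (±1-valued) Boolean function. -/
def IsBoolean {n : ℕ} (f : (Fin n → Bool) → ℝ) : Prop := ∀ x, f x = 1 ∨ f x = -1

/-- Restriction `f^{(i,a)}` of `f` obtained by fixing the `i`-th input to `a`. -/
def restrict {n : ℕ} (f : (Fin n → Bool) → ℝ) (i : Fin n) (a : Bool) :
    (Fin n → Bool) → ℝ :=
  fun x => f (Function.update x i a)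

/-- Variable `i` is relevant for `f`. -/
def relevant {n : ℕ} (f : (Fin n → Bool) → ℝ) (i : Fin n) : Prop :=
  ∃ x, f x ≠ f (Function.update x i (!(x i)))

/-- Number of relevant variables of `f`. -/
noncomputable def numRel {n : ℕ} (f : (Fin n → Bool) → ℝ) : ℕ :=
  Nat.card {i : Fin n // relevant f i}

/-- Influence `I_i(f) = Pr[f(X) ≠ f(X ⊕ e_i)]` for uniform `X`. -/
noncomputable def influence {n : ℕ} (f : (Fin n → Bool) → ℝ) (i : Fin n) : ℝ :=
  (Nat.card {x : Fin n → Bool // f x ≠ f (Function.update x i (!(x i)))} : ℝ) / 2 ^ n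

/-- Average sensitivity `as(f) = ∑_i I_i(f)`. -/
noncomputable def avgSens {n : ℕ} (f : (Fin n → Bool) → ℝ) : ℝ :=
  ∑ i : Fin n, influence f i

/-- `IsNCFwith f L` : `f` is a nested canalizing function with the nested canalizing
structure recorded by the list `L` of triples `(π(j), α_j, β_j)`: fixing variable
`π(j)` to its canalizing value `α_j` forces the output `β_j`, and the restriction to
the non-canalizing value continues with the rest of the list; the base case is a
constant (±1) function. -/
inductive IsNCFwith : {n : ℕ} → ((Fin n → Bool) → ℝ) → List (Fin n × Bool × ℝ) → Prop where
  | const {n : ℕ} (f : (Fin n → Bool) → ℝ) (b : ℝ) (hb : b = 1 ∨ b = -1)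
      (h : ∀ x, f x = b) : IsNCFwith f []
  | step {n : ℕ} (f : (Fin n → Bool) → ℝ) (i : Fin n) (a : Bool) (b : ℝ)
      (hb : b = 1 ∨ b = -1) (L : List (Fin n × Bool × ℝ))
      (hrel : relevant f i)
      (hcan : ∀ x, x i = a → f x = b)
      (hrest : IsNCFwith (restrict f i (!a)) L) :
      IsNCFwith f ((i, a, b) :: L)

/-- `f` is a nested canalizing function. -/
def IsNCF {n : ℕ} (f : (Fin n → Bool) → ℝ) : Prop := ∃ L, IsNCFwith f L

/-- Variable `i` is most dominant: some nested canalizing ordering starts with `i`. -/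
def MostDominant {n : ℕ} (f : (Fin n → Bool) → ℝ) (i : Fin n) : Prop :=
  ∃ a b L, IsNCFwith f ((i, a, b) :: L)

/-- The canalized output values `β_1, β_2, …` recorded in `L` alternate in sign. -/
def AltBetas {n : ℕ} (L : List (Fin n × Bool × ℝ)) : Prop :=
  List.Chain' (fun p q : Fin n × Bool × ℝ => q.2.2 = -p.2.2) L

section aux
variable {n : ℕ}

lemma fhat_empty (f : (Fin n → Bool) → ℝ) : fhat f ∅ = (∑ x : Fin n → Bool, f x) / 2 ^ n := by
  simp [fhat, chi]

lemma card_cube : Fintype.card (Fin n → Bool) = 2 ^ n := by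
  simp

lemma flip_invol (i : Fin n) :
    Function.Involutive (fun x : Fin n → Bool => Function.update x i (!(x i))) := by
  intro x
  simp [Function.update_idem]

lemma sum_flip (i : Fin n) (F : (Fin n → Bool) → ℝ) :
    ∑ x : Fin n → Bool, F (Function.update x i (!(x i))) = ∑ x : Fin n → Bool, F x :=
  Equiv.sum_comp (Function.Involutive.toPerm _ (flip_invol i)) F

lemma mean_split (f : (Fin n → Bool) → ℝ) (i : Fin n) (a : Bool) (b : ℝ)
    (hcan : ∀ x, x i = a → f x = b) :
    fhat f ∅ = (b + fhat (restrict f i (!a)) ∅) / 2 := by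
  have key : ∀ x : Fin n → Bool,
      f x + f (Function.update x i (!(x i))) = b + restrict f i (!a) x := by
    intro x
    by_cases h : x i = a
    · rw [hcan x h, h]; rfl
    · have hx : x i = !a := by cases hxa : x i <;> cases a <;> simp_all
      have h1 : f (Function.update x i (!(x i))) = b := by
        apply hcan; simp [hx]
      have h2 : restrict f i (!a) x = f x := by
        show f (Function.update x i (!a)) = f x
        rw [← hx, Function.update_eq_self]
      rw [h1, h2]; ring
  have h2 : (2:ℝ) * ∑ x : Fin n → Bool, f x
      = 2 ^ n * b + ∑ x : Fin n → Bool, restrict f i (!a) x := by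
    have := sum_flip i f
    calc (2:ℝ) * ∑ x : Fin n → Bool, f x
        = ∑ x : Fin n → Bool, (f x + f (Function.update x i (!(x i)))) := by
          rw [Finset.sum_add_distrib, this]; ring
      _ = ∑ x : Fin n → Bool, (b + restrict f i (!a) x) := by
          exact Finset.sum_congr rfl fun x _ => key x
      _ = 2 ^ n * b + ∑ x : Fin n → Bool, restrict f i (!a) x := by
          rw [Finset.sum_add_distrib, Finset.sum_const, Finset.card_univ, card_cube]
          push_cast; ring
  have hpow : (2:ℝ) ^ n ≠ 0 := by positivity
  have hS : (∑ x : Fin n → Bool, f x)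
      = (2 ^ n * b + ∑ x : Fin n → Bool, restrict f i (!a) x) / 2 := by linarith
  rw [fhat_empty, fhat_empty, hS]
  field_simp

lemma not_relevant_restrict (f : (Fin n → Bool) → ℝ) (i : Fin n) (a : Bool) :
    ¬ relevant (restrict f i a) i := by
  rintro ⟨x, hx⟩
  apply hx
  show f (Function.update x i a) = f (Function.update (Function.update x i _) i a)
  rw [Function.update_idem]

lemma relevant_restrict_iff (f : (Fin n → Bool) → ℝ) (i : Fin n) (a b : Bool) (bb : ℝ)
    (hcan : ∀ x, x i = a → f x = bb) (j : Fin n) (hj : j ≠ i) :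
    relevant (restrict f i (!a)) j ↔ relevant f j := by
  constructor
  · rintro ⟨x, hx⟩
    refine ⟨Function.update x i (!a), ?_⟩
    have hcomm : Function.update (Function.update x i (!a)) j
        (!(Function.update x i (!a) j)) = Function.update (Function.update x j (!(x j))) i (!a) := by
      rw [Function.update_of_ne hj, Function.update_comm hj]
    rw [hcomm]
    exact hx
  · rintro ⟨x, hx⟩
    have hxi : x i = !a := by
      by_contra h
      have hxa : x i = a := by cases hxa : x i <;> cases a <;> simp_all
      apply hx
      rw [hcan x hxa, hcan]
      rw [Function.update_of_ne (Ne.symm hj)]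
      exact hxa
    refine ⟨x, ?_⟩
    have h1 : restrict f i (!a) x = f x := by
      show f (Function.update x i (!a)) = f x
      rw [← hxi, Function.update_eq_self]
    have h2 : restrict f i (!a) (Function.update x j (!(x j))) = f (Function.update x j (!(x j))) := by
      show f (Function.update (Function.update x j (!(x j))) i (!a)) = _
      have hv : Function.update x j (!(x j)) i = !a := by
        rw [Function.update_of_ne (Ne.symm hj), hxi]
      rw [← hv, Function.update_eq_self]
    rw [h1, h2]
    exact hx

open Classical in
lemma numRel_eq_filter (f : (Fin n → Bool) → ℝ) :
    numRel f = (Finset.univ.filter (relevant f)).card := by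
  rw [numRel, Nat.card_eq_fintype_card, Fintype.card_subtype]

lemma numRel_step (f : (Fin n → Bool) → ℝ) (i : Fin n) (a : Bool) (bb : ℝ)
    (hrel : relevant f i) (hcan : ∀ x, x i = a → f x = bb) :
    numRel f = numRel (restrict f i (!a)) + 1 := by
  classical
  rw [numRel_eq_filter, numRel_eq_filter]
  have hset : Finset.univ.filter (relevant f)
      = insert i (Finset.univ.filter (relevant (restrict f i (!a)))) := by
    ext j
    simp only [Finset.mem_filter, Finset.mem_univ, true_and, Finset.mem_insert]
    by_cases hj : j = i
    · subst hj; simp [hrel]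
    · rw [relevant_restrict_iff f i a a bb hcan j hj]
      tauto
  rw [hset, Finset.card_insert_of_notMem]
  simp [not_relevant_restrict]

lemma numRel_const (f : (Fin n → Bool) → ℝ) (c : ℝ) (h : ∀ x, f x = c) :
    numRel f = 0 := by
  classical
  rw [numRel_eq_filter]
  convert Finset.card_empty
  ext j
  simp only [Finset.mem_filter, Finset.mem_univ, true_and, Finset.notMem_empty, iff_false]
  rintro ⟨x, hx⟩
  exact hx (by rw [h, h])

lemma fhat_const (f : (Fin n → Bool) → ℝ) (c : ℝ) (h : ∀ x, f x = c) :
    fhat f ∅ = c := by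
  rw [fhat_empty]
  rw [Finset.sum_congr rfl fun x _ => h x, Finset.sum_const, Finset.card_univ, card_cube]
  have : (2:ℝ)^n ≠ 0 := by positivity
  field_simp
  simp [nsmul_eq_mul]

end aux

def firstBeta {n : ℕ} : List (Fin n × Bool × ℝ) → ℝ
  | [] => 0
  | p :: _ => p.2.2

lemma headI_pm {n : ℕ} (f : (Fin n → Bool) → ℝ) (L : List (Fin n × Bool × ℝ))
    (hf : IsNCFwith f L) (hne : L ≠ []) : firstBeta L = 1 ∨ firstBeta L = -1 := by
  cases hf with
  | const f b hb h => exact absurd rfl hne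
  | step f i a b hb L hrel hcan hrest => exact hb

lemma main_ncf {n : ℕ} (f : (Fin n → Bool) → ℝ) (L : List (Fin n × Bool × ℝ))
    (hf : IsNCFwith f L) :
    L ≠ [] → AltBetas L →
    fhat f ∅ = firstBeta L * ((1:ℝ)/3) * ((-1)^(numRel f) / 2^(numRel f - 1) + 1)
      ∧ 1 ≤ numRel f := by
  induction hf with
  | const f b hb h => exact fun hne => absurd rfl hne
  | step f i a b hb L hrel hcan hrest ih =>
    intro _ halt
    have hsplit := mean_split f i a b hcan
    have hnum := numRel_step f i a b hrel hcan
    cases hL : L with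
    | nil =>
      subst hL
      cases hrest with
      | const g c hc hconst =>
        have hn0 : numRel (restrict f i (!a)) = 0 := numRel_const _ c hconst
        have hk1 : numRel f = 1 := by omega
        have hcb : c = -b := by
          rcases hc with hc | hc <;> rcases hb with hb | hb <;> try (subst hc; subst hb)
          · exfalso
            obtain ⟨x, hx⟩ := hrel
            apply hx
            have hval : ∀ y : Fin n → Bool, f y = 1 := by
              intro y
              by_cases hy : y i = a
              · exact hcan y hy
              · have hyi : y i = !a := by cases hya : y i <;> cases a <;> simp_all
                have : restrict f i (!a) y = f y := by
                  show f (Function.update y i (!a)) = f y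
                  rw [← hyi, Function.update_eq_self]
                rw [← this, hconst]
            rw [hval, hval]
          · norm_num
          · norm_num
          · exfalso
            obtain ⟨x, hx⟩ := hrel
            apply hx
            have hval : ∀ y : Fin n → Bool, f y = -1 := by
              intro y
              by_cases hy : y i = a
              · exact hcan y hy
              · have hyi : y i = !a := by cases hya : y i <;> cases a <;> simp_all
                have : restrict f i (!a) y = f y := by
                  show f (Function.update y i (!a)) = f y
                  rw [← hyi, Function.update_eq_self]
                rw [← this, hconst]
            rw [hval, hval]
        have hg : fhat (restrict f i (!a)) ∅ = c := fhat_const _ c hconst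
        refine ⟨?_, by omega⟩
        rw [hsplit, hg, hcb, hk1]
        norm_num
    | cons p L' =>
      subst hL
      have hchain := List.isChain_cons_cons.mp halt
      have hpb : p.2.2 = -b := hchain.1
      obtain ⟨hg, hge⟩ := ih (by simp) hchain.2
      obtain ⟨m, hm⟩ : ∃ m, numRel (restrict f i (!a)) = m + 1 :=
        ⟨numRel (restrict f i (!a)) - 1, by omega⟩
      have hkf : numRel f = m + 2 := by omega
      refine ⟨?_, by omega⟩
      simp only [firstBeta] at hg ⊢
      rw [hsplit, hg, hpb, hkf, hm]
      have h1 : (m + 1) - 1 = m := by omega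
      have h2 : (m + 2) - 1 = m + 1 := by omega
      rw [h1, h2]
      simp only [pow_succ]
      have hpow : (2:ℝ)^m ≠ 0 := by positivity
      field_simp
      ring

/-- Zero coefficient of an NCF with alternating canalized values. -/
theorem fhat_empty_ncf_alternating {n : ℕ} (f : (Fin n → Bool) → ℝ)
    (L : List (Fin n × Bool × ℝ)) (hf : IsNCFwith f L) (hne : L ≠ [])
    (halt : AltBetas L) (k : ℕ) (hk : numRel f = k) :
    |fhat f ∅| = (1 / 3) * ((-1 : ℝ) ^ k / 2 ^ (k - 1) + 1) := by
  obtain ⟨hval, hge⟩ := main_ncf f L hf hne halt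
  have hb := headI_pm f L hf hne
  subst hk
  rw [hval, abs_mul, abs_mul]
  have hb1 : |firstBeta L| = 1 := by rcases hb with hb | hb <;> rw [hb] <;> norm_num
  have hnn : (0:ℝ) ≤ (-1)^(numRel f) / 2^(numRel f - 1) + 1 := by
    have h1 : |(-1:ℝ)^(numRel f) / 2^(numRel f - 1)| ≤ 1 := by
      rw [abs_div, abs_pow, abs_neg, abs_one, one_pow, abs_pow]
      rw [div_le_one (by positivity)]
      simp only [abs_two]
      exact one_le_pow₀ (by norm_num)
    have := abs_le.mp h1
    linarith [this.1]
  rw [abs_of_nonneg hnn, hb1]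
  norm_num
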